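/- Let k be a positive integer, Q a primitive string, and S a string with |S| ≥ (2k+1)|Q|. If δ_E(S, Q^∞[ℓ..r)) ≤ k and δ_E(S, Q^∞[ℓ'..r')) ≤ k for integers ℓ ≤ r and ℓ' ≤ r', then there are integers j, j' and a decomposition S = S_L · S_R such that δ_E(S, Q^∞[ℓ..r)) = δ_E(S_L, Q^∞[ℓ..j|Q|)) + δ_E(S_R, Q^∞[j|Q|..r)) and δ_E(S, Q^∞[ℓ'..r')) = δ_E(S_L, Q^∞[ℓ'..j'|Q|)) + δ_E(S_R, Q^∞[j'|Q|..r')). Moreover, if |Q| = 1, the length assumption on S is unnecessary. -/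

import Mathlib

open List

variable {α : Type*}

/-- The fragment S[i..j) of a string (list) S. -/
def frag (S : List α) (i j : ℕ) : List α := (S.drop i).take (j - i)

/-- Q^∞[a..b): the fragment of the infinite repetition of Q from a (incl.) to b (excl.). -/
def repPrefix [Inhabited α] (Q : List α) (a b : ℕ) : List α :=
  (List.range' a (b - a)).map (fun i => Q.getD (i % Q.length) default)

/-- Hamming distance of two strings of the same length (counted over positions of S). -/
def hamming [DecidableEq α] [Inhabited α] (S T : List α) : ℕ :=
  ((Finset.range S.length).filter
    (fun i => S.getD i default ≠ T.getD i default)).card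

/-- δ_H(S, Q*): Hamming distance of S to the length-|S| prefix of Q^∞. -/
def hammingStar [DecidableEq α] [Inhabited α] (S Q : List α) : ℕ :=
  hamming S (repPrefix Q 0 S.length)

/-- The cost structure of Mathlib's former `Levenshtein.Cost` (removed from Mathlib). -/
structure Levenshtein.Cost (α₀ β₀ δ₀ : Type*) where
  delete : α₀ → δ₀
  insert : β₀ → δ₀
  substitute : α₀ → β₀ → δ₀

/-- Mathlib's former `Levenshtein.defaultCost`: unit costs, free exact match. -/
def Levenshtein.defaultCost {α₀ : Type*} [DecidableEq α₀] : Levenshtein.Cost α₀ α₀ ℕ where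
  delete _ := 1
  insert _ := 1
  substitute a b := if a = b then 0 else 1

/-- Mathlib's former `levenshtein`, by its characterising recursion equations. -/
def levenshtein {α₀ β₀ δ₀ : Type*} [AddZeroClass δ₀] [Min δ₀] (C : Levenshtein.Cost α₀ β₀ δ₀) :
    List α₀ → List β₀ → δ₀
  | [], [] => 0
  | [], y :: ys => C.insert y + levenshtein C [] ys
  | x :: xs, [] => C.delete x + levenshtein C xs []
  | x :: xs, y :: ys => min (C.delete x + levenshtein C xs (y :: ys))
      (min (C.insert y + levenshtein C (x :: xs) ys) (C.substitute x y + levenshtein C xs ys))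

/-- Edit (Levenshtein) distance. -/
def editDist [DecidableEq α] (S T : List α) : ℕ :=
  levenshtein Levenshtein.defaultCost S T

/-- A string is primitive if it is nonempty and not a proper power of a string. -/
def Primitive (Q : List α) : Prop :=
  Q ≠ [] ∧ ∀ (U : List α) (t : ℕ), 2 ≤ t → Q ≠ (List.replicate t U).flatten

/-- p is a period of S. -/
def IsPeriod [Inhabited α] (p : ℕ) (S : List α) : Prop :=
  0 < p ∧ ∀ i, i + p < S.length → S.getD i default = S.getD (i + p) default

/-- per(S): the smallest period of S. -/
noncomputable def per [Inhabited α] (S : List α) : ℕ := sInf {p | IsPeriod p S}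

/-- Occ^H_k(P,T): starting positions of k-mismatch occurrences of P in T. -/
def occH [DecidableEq α] [Inhabited α] (k : ℕ) (P T : List α) : Finset ℕ :=
  (Finset.range (T.length - P.length + 1)).filter
    (fun i => hamming P (frag T i (i + P.length)) ≤ k)

/-- Exact occurrences of B in T. -/
def occExact [DecidableEq α] (B T : List α) : Finset ℕ :=
  (Finset.range (T.length + 1)).filter (fun i => frag T i (i + B.length) = B)

/-- Occ^E_k(P,T): starting positions of k-error (edit distance) occurrences of P in T. -/
def occE [DecidableEq α] (k : ℕ) (P T : List α) : Set ℕ :=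
  {i | ∃ j, i ≤ j ∧ j ≤ T.length ∧ editDist P (frag T i j) ≤ k}

/-- δ_E^cyc(S,Q): minimum edit distance of S to any substring of Q^∞. -/
noncomputable def edCyc [DecidableEq α] [Inhabited α] (S Q : List α) : ℕ :=
  sInf {d | ∃ i j, i ≤ j ∧ d = editDist S (repPrefix Q i j)}

/-- δ_E(S,Q*): minimum edit distance of S to a prefix of Q^∞. -/
noncomputable def edStar [DecidableEq α] [Inhabited α] (S Q : List α) : ℕ :=
  sInf {d | ∃ j, d = editDist S (repPrefix Q 0 j)}

/-- Minimum edit distance of T to a substring of Q^∞ starting at position x. -/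
noncomputable def edStarAt [DecidableEq α] [Inhabited α] (T Q : List α) (x : ℕ) : ℕ :=
  sInf {d | ∃ j, x ≤ j ∧ d = editDist T (repPrefix Q x j)}

/-- Minimum edit distance of T to a substring of Q^∞ ending at a position ≡ y (mod |Q|). -/
noncomputable def edEndAt [DecidableEq α] [Inhabited α] (T Q : List α) (y : ℕ) : ℕ :=
  sInf {d | ∃ i j, i ≤ j ∧ j % Q.length = y % Q.length ∧ d = editDist T (repPrefix Q i j)}

/-- Minimum edit distance of L to a substring of Q^∞ ending at a multiple of |Q|. -/
noncomputable def edEndMul [DecidableEq α] [Inhabited α] (L Q : List α) : ℕ :=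
  sInf {d | ∃ i j, i ≤ j * Q.length ∧ d = editDist L (repPrefix Q i (j * Q.length))}

/-- The fragment S[i..j) of S is locked with respect to Q. -/
def Locked [DecidableEq α] [Inhabited α] (S Q : List α) (i j : ℕ) : Prop :=
  (∃ a : ℕ, edCyc (frag S i j) Q = editDist (frag S i j) (repPrefix Q 0 (a * Q.length))) ∨
  (j = S.length ∧ edCyc (frag S i j) Q = edStar (frag S i j) Q) ∨
  (i = 0 ∧ edCyc (frag S i j) Q = edEndMul (frag S i j) Q) ∨
  (i = 0 ∧ j = S.length)

/-- rot^j(Q): rotation moving the last j (mod |Q|) characters to the front. -/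
def rotR (Q : List α) (j : ℕ) : List α := Q.rotate (Q.length - j % Q.length)

/-- |Mis(T,Q*) ∩ [a,b)|. -/
def misCount [DecidableEq α] [Inhabited α] (T Q : List α) (a b : ℕ) : ℕ :=
  ((Finset.Ico a b).filter (fun i => i < T.length ∧
     T.getD i default ≠ Q.getD (i % Q.length) default)).card

/-- μ_j: the total weight of aligned mismatch pairs of P and T against Q^∞ at shift j·|Q|:
a pair (τ = j|Q|+π, π) with π ∈ Mis(P,Q*), τ ∈ Mis(T,Q*) has weight 2 − δ_H(P[π],T[τ]). -/
def mu [DecidableEq α] [Inhabited α] (P T Q : List α) (j : ℕ) : ℕ :=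
  ∑ π ∈ Finset.range P.length,
    if P.getD π default ≠ Q.getD (π % Q.length) default ∧
       j * Q.length + π < T.length ∧
       T.getD (j * Q.length + π) default ≠ Q.getD ((j * Q.length + π) % Q.length) default
    then (if P.getD π default = T.getD (j * Q.length + π) default then 2 else 1)
    else 0

set_option linter.unusedSectionVars false
set_option linter.unusedVariables false

section LevLemmas
variable {α₀ β₀ δ₀ : Type*} [AddZeroClass δ₀] [Min δ₀] {C : Levenshtein.Cost α₀ β₀ δ₀}

theorem levenshtein_nil_nil : levenshtein C [] [] = 0 := by rw [levenshtein]

theorem levenshtein_nil_cons (y : β₀) (ys : List β₀) :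
    levenshtein C [] (y :: ys) = C.insert y + levenshtein C [] ys := by rw [levenshtein]

theorem levenshtein_cons_nil (x : α₀) (xs : List α₀) :
    levenshtein C (x :: xs) [] = C.delete x + levenshtein C xs [] := by rw [levenshtein]

theorem levenshtein_cons_cons (x : α₀) (xs : List α₀) (y : β₀) (ys : List β₀) :
    levenshtein C (x :: xs) (y :: ys) = min (C.delete x + levenshtein C xs (y :: ys))
      (min (C.insert y + levenshtein C (x :: xs) ys) (C.substitute x y + levenshtein C xs ys)) := by
  rw [levenshtein]

@[simp] theorem Levenshtein.defaultCost_delete [DecidableEq α₀] (a : α₀) :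
    (Levenshtein.defaultCost : Levenshtein.Cost α₀ α₀ ℕ).delete a = 1 := rfl

@[simp] theorem Levenshtein.defaultCost_insert [DecidableEq α₀] (a : α₀) :
    (Levenshtein.defaultCost : Levenshtein.Cost α₀ α₀ ℕ).insert a = 1 := rfl

@[simp] theorem Levenshtein.defaultCost_substitute [DecidableEq α₀] (a b : α₀) :
    (Levenshtein.defaultCost : Levenshtein.Cost α₀ α₀ ℕ).substitute a b = if a = b then 0 else 1 :=
  rfl

end LevLemmas

namespace EditSplitAux

variable {α : Type*} [DecidableEq α]
/-- Edit script operations. -/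
inductive Op (α : Type*) where
  | mtch (a : α)
  | subst (a b : α)
  | del (a : α)
  | ins (b : α)

variable {ops : List (Op α)}

/-- Source string of an edit script. -/
def src : List (Op α) → List α
  | [] => []
  | .mtch a :: t => a :: src t
  | .subst a _ :: t => a :: src t
  | .del a :: t => a :: src t
  | .ins _ :: t => src t

/-- Target string of an edit script. -/
def tgt : List (Op α) → List α
  | [] => []
  | .mtch a :: t => a :: tgt t
  | .subst _ b :: t => b :: tgt t
  | .del _ :: t => tgt t
  | .ins b :: t => b :: tgt t

/-- Cost of an edit script. -/
def cost : List (Op α) → ℕ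
  | [] => 0
  | .mtch _ :: t => cost t
  | .subst _ _ :: t => 1 + cost t
  | .del _ :: t => 1 + cost t
  | .ins _ :: t => 1 + cost t

@[simp] theorem src_nil : src ([] : List (Op α)) = [] := rfl
@[simp] theorem tgt_nil : tgt ([] : List (Op α)) = [] := rfl
@[simp] theorem cost_nil : cost ([] : List (Op α)) = 0 := rfl
@[simp] theorem src_mtch (a : α) : src (.mtch a :: ops) = a :: src ops := rfl
@[simp] theorem src_subst (a b : α) : src (.subst a b :: ops) = a :: src ops := rfl
@[simp] theorem src_del (a : α) : src (.del a :: ops) = a :: src ops := rfl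
@[simp] theorem src_ins (b : α) : src (.ins b :: ops) = src ops := rfl
@[simp] theorem tgt_mtch (a : α) : tgt (.mtch a :: ops) = a :: tgt ops := rfl
@[simp] theorem tgt_subst (a b : α) : tgt (.subst a b :: ops) = b :: tgt ops := rfl
@[simp] theorem tgt_del (a : α) : tgt (.del a :: ops) = tgt ops := rfl
@[simp] theorem tgt_ins (b : α) : tgt (.ins b :: ops) = b :: tgt ops := rfl
@[simp] theorem cost_mtch (a : α) : cost (.mtch a :: ops) = cost ops := rfl
@[simp] theorem cost_subst (a b : α) : cost (.subst a b :: ops) = 1 + cost ops := rfl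
@[simp] theorem cost_del (a : α) : cost (.del a :: ops) = 1 + cost ops := rfl
@[simp] theorem cost_ins (b : α) : cost (.ins b :: ops) = 1 + cost ops := rfl

@[simp] theorem src_append (o1 o2 : List (Op α)) : src (o1 ++ o2) = src o1 ++ src o2 := by
  induction o1 with
  | nil => simp
  | cons op t ih => cases op <;> simp [ih]

@[simp] theorem tgt_append (o1 o2 : List (Op α)) : tgt (o1 ++ o2) = tgt o1 ++ tgt o2 := by
  induction o1 with
  | nil => simp
  | cons op t ih => cases op <;> simp [ih]

@[simp] theorem cost_append (o1 o2 : List (Op α)) : cost (o1 ++ o2) = cost o1 + cost o2 := by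
  induction o1 with
  | nil => simp
  | cons op t ih => cases op <;> simp [ih] <;> omega

@[simp] theorem src_map_mtch (W : List α) : src (W.map Op.mtch) = W := by
  induction W with
  | nil => rfl
  | cons a t ih => simp [ih]

@[simp] theorem tgt_map_mtch (W : List α) : tgt (W.map Op.mtch) = W := by
  induction W with
  | nil => rfl
  | cons a t ih => simp [ih]

@[simp] theorem cost_map_mtch (W : List α) : cost (W.map Op.mtch) = 0 := by
  induction W with
  | nil => rfl
  | cons a t ih => simp [ih]

/-- editDist is bounded by the cost of any edit script. -/
theorem editDist_le_cost (ops : List (Op α)) : editDist (src ops) (tgt ops) ≤ cost ops := by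
  induction ops with
  | nil => simp [editDist, levenshtein_nil_nil]
  | cons op t ih =>
    cases op with
    | mtch a =>
      simp only [src_mtch, tgt_mtch, cost_mtch]
      calc editDist (a :: src t) (a :: tgt t) ≤
          Levenshtein.defaultCost.substitute a a + editDist (src t) (tgt t) := by
            rw [editDist, levenshtein_cons_cons]
            exact min_le_of_right_le (min_le_right _ _)
        _ ≤ cost t := by simpa using ih
    | subst a b =>
      simp only [src_subst, tgt_subst, cost_subst]
      calc editDist (a :: src t) (b :: tgt t) ≤
          Levenshtein.defaultCost.substitute a b + editDist (src t) (tgt t) := by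
            rw [editDist, levenshtein_cons_cons]
            exact min_le_of_right_le (min_le_right _ _)
        _ ≤ 1 + cost t := by
            have : Levenshtein.defaultCost.substitute a b ≤ 1 := by
              simp [Levenshtein.defaultCost]; split <;> omega
            omega
    | del a =>
      simp only [src_del, tgt_del, cost_del]
      cases h : tgt t with
      | nil =>
        rw [editDist, levenshtein_cons_nil]
        have : editDist (src t) (tgt t) ≤ cost t := ih
        rw [h] at this
        simp only [Levenshtein.defaultCost_delete]
        exact add_le_add le_rfl (by simpa [editDist] using this)
      | cons y ys =>
        rw [editDist, levenshtein_cons_cons]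
        refine le_trans (min_le_left _ _) ?_
        have : editDist (src t) (tgt t) ≤ cost t := ih
        rw [h] at this
        simp only [Levenshtein.defaultCost_delete]
        exact add_le_add le_rfl (by simpa [editDist] using this)
    | ins b =>
      simp only [src_ins, tgt_ins, cost_ins]
      cases h : src t with
      | nil =>
        rw [editDist, levenshtein_nil_cons]
        have : editDist (src t) (tgt t) ≤ cost t := ih
        rw [h] at this
        simp only [Levenshtein.defaultCost_insert]
        exact add_le_add le_rfl (by simpa [editDist] using this)
      | cons x xs =>
        rw [editDist, levenshtein_cons_cons]
        refine le_trans (min_le_of_right_le (min_le_left _ _)) ?_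
        have : editDist (src t) (tgt t) ≤ cost t := ih
        rw [h] at this
        simp only [Levenshtein.defaultCost_insert]
        exact add_le_add le_rfl (by simpa [editDist] using this)


/-- There is an optimal edit script between any two lists. -/
theorem exists_ops (S T : List α) :
    ∃ ops : List (Op α), src ops = S ∧ tgt ops = T ∧ cost ops = editDist S T := by
  induction S generalizing T with
  | nil =>
    induction T with
    | nil => exact ⟨[], rfl, rfl, by simp [editDist, levenshtein_nil_nil]⟩
    | cons b ys ih =>
      obtain ⟨ops, h1, h2, h3⟩ := ih
      refine ⟨.ins b :: ops, by simpa using h1, by simp [h2], ?_⟩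
      simp only [cost_ins, editDist, levenshtein_nil_cons, Levenshtein.defaultCost_insert]
      rw [h3]; rfl
  | cons a xs ihS =>
    induction T with
    | nil =>
      obtain ⟨ops, h1, h2, h3⟩ := ihS []
      refine ⟨.del a :: ops, by simp [h1], by simp [h2], ?_⟩
      simp only [cost_del, editDist, levenshtein_cons_nil, Levenshtein.defaultCost_delete]
      rw [h3]; rfl
    | cons b ys ihT =>
      obtain ⟨od, d1, d2, d3⟩ := ihS (b :: ys)
      obtain ⟨oi, i1, i2, i3⟩ := ihT
      obtain ⟨os, s1, s2, s3⟩ := ihS ys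
      have hrec : editDist (a :: xs) (b :: ys) =
          min (1 + editDist xs (b :: ys)) (min (1 + editDist (a :: xs) ys)
            ((if a = b then 0 else 1) + editDist xs ys)) := by
        simp [editDist, levenshtein_cons_cons]
      rcases min_cases (1 + editDist xs (b :: ys)) (min (1 + editDist (a :: xs) ys)
            ((if a = b then 0 else 1) + editDist xs ys)) with ⟨heq, _⟩ | ⟨heq, _⟩
      · refine ⟨.del a :: od, by simp [d1], by simp [d2], ?_⟩
        rw [hrec, heq]; simp [d3]
      · rcases min_cases (1 + editDist (a :: xs) ys)
            ((if a = b then 0 else 1) + editDist xs ys) with ⟨heq2, _⟩ | ⟨heq2, _⟩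
        · refine ⟨.ins b :: oi, by simp [i1], by simp [i2], ?_⟩
          rw [hrec, heq, heq2]; simp [i3]
        · by_cases hab : a = b
          · subst hab
            refine ⟨.mtch a :: os, by simp [s1], by simp [s2], ?_⟩
            rw [hrec, heq, heq2]; simp [s3]
          · refine ⟨.subst a b :: os, by simp [s1], by simp [s2], ?_⟩
            rw [hrec, heq, heq2]; simp [s3, hab]

theorem editDist_append_le (X Y U V : List α) :
    editDist (X ++ Y) (U ++ V) ≤ editDist X U + editDist Y V := by
  obtain ⟨o1, s1, t1, c1⟩ := exists_ops X U
  obtain ⟨o2, s2, t2, c2⟩ := exists_ops Y V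
  have h := editDist_le_cost (o1 ++ o2)
  simp only [src_append, tgt_append, cost_append, s1, s2, t1, t2, c1, c2] at h
  exact h

/-- Splitting an optimal edit script at any point splits the edit distance. -/
theorem split_at {o1 o2 : List (Op α)}
    (h : cost (o1 ++ o2) = editDist (src (o1 ++ o2)) (tgt (o1 ++ o2))) :
    editDist (src (o1 ++ o2)) (tgt (o1 ++ o2))
      = editDist (src o1) (tgt o1) + editDist (src o2) (tgt o2) := by
  have h1 := editDist_le_cost o1
  have h2 := editDist_le_cost o2
  have h3 := editDist_append_le (src o1) (src o2) (tgt o1) (tgt o2)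
  simp only [src_append, tgt_append, cost_append] at h ⊢
  omega


/-- Encoded positions of error operations: an error at source position `i` is encoded
as `2i` (insertion) or `2i+1` (deletion/substitution). -/
def marks : List (Op α) → ℕ → List ℕ
  | [], _ => []
  | .mtch _ :: t, i => marks t (i+1)
  | .subst _ _ :: t, i => (2*i+1) :: marks t (i+1)
  | .del _ :: t, i => (2*i+1) :: marks t (i+1)
  | .ins _ :: t, i => (2*i) :: marks t i

theorem marks_length (ops : List (Op α)) (i : ℕ) : (marks ops i).length = cost ops := by
  induction ops generalizing i with
  | nil => rfl
  | cons op t ih => cases op <;> simp [marks, ih, cost] <;> omega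

theorem marks_shift (ops : List (Op α)) (i : ℕ) :
    marks ops (i+1) = (marks ops i).map (· + 2) := by
  induction ops generalizing i with
  | nil => rfl
  | cons op t ih =>
    cases op <;> simp only [marks, ih, List.map_cons] <;> constructor <;> first | rfl | omega

theorem clean_decomp (ops : List (Op α)) : ∀ u v : ℕ, u ≤ v → v ≤ (src ops).length →
    (∀ μ ∈ marks ops 0, μ ≤ 2*u ∨ 2*v ≤ μ) →
    ∃ o1 o2 : List (Op α),
      ops = o1 ++ (((src ops).drop u).take (v-u)).map Op.mtch ++ o2 ∧
      (src o1).length = u := by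
  induction ops with
  | nil =>
    intro u v huv hv h
    have hv0 : v = 0 := by simpa using hv
    have hu0 : u = 0 := by omega
    exact ⟨[], [], by simp [hu0, hv0], by simp [hu0]⟩
  | cons op t ih =>
    intro u v huv hv h
    by_cases hv0 : v = 0
    · have hu0 : u = 0 := by omega
      exact ⟨[], op :: t, by simp [hu0, hv0], by simp [hu0]⟩
    obtain ⟨v', rfl⟩ : ∃ w, v = w + 1 := ⟨v - 1, by omega⟩
    have hsh : marks t 1 = (marks t 0).map (· + 2) := marks_shift t 0
    cases op with
    | mtch a =>
      have hm : marks (Op.mtch a :: t) 0 = (marks t 0).map (· + 2) := by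
        simp [marks, hsh]
      by_cases hu : u = 0
      · subst hu
        by_cases hvv : v' = 0
        · subst hvv
          exact ⟨[], t, by simp [src], rfl⟩
        · have hvt : v' ≤ (src t).length := by simp [src] at hv; omega
          have h' : ∀ μ ∈ marks t 0, μ ≤ 2*0 ∨ 2*v' ≤ μ := by
            intro μ hμ
            have : μ + 2 ∈ marks (Op.mtch a :: t) 0 := by
              rw [hm]; exact List.mem_map.2 ⟨μ, hμ, rfl⟩
            rcases h _ this with h2 | h2
            · omega
            · right; omega
          obtain ⟨o1', o2', hdec, hlen⟩ := ih 0 v' (by omega) hvt h'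
          have ho1' : o1' = [] := by
            cases o1' with
            | nil => rfl
            | cons op' rest =>
              cases op' with
              | ins b =>
                exfalso
                have h0 : (0:ℕ) ∈ marks t 0 := by
                  rw [hdec]; simp [marks]
                have h2 : (2:ℕ) ∈ marks (Op.mtch a :: t) 0 := by
                  rw [hm]; exact List.mem_map.2 ⟨0, h0, rfl⟩
                rcases h _ h2 with h3 | h3 <;> omega
              | mtch c => simp [src] at hlen
              | subst c d => simp [src] at hlen
              | del c => simp [src] at hlen
          subst ho1'
          simp only [List.nil_append] at hdec
          refine ⟨[], o2', ?_, by simp⟩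
          simp only [src_mtch, List.drop_zero, Nat.sub_zero, List.take_succ_cons,
            List.map_cons, List.nil_append, List.cons_append]
          simp only [List.drop_zero, Nat.sub_zero] at hdec
          rw [← hdec]
      · obtain ⟨u', rfl⟩ : ∃ w, u = w + 1 := ⟨u - 1, by omega⟩
        have hvt : v' ≤ (src t).length := by simp [src] at hv; omega
        have h' : ∀ μ ∈ marks t 0, μ ≤ 2*u' ∨ 2*v' ≤ μ := by
          intro μ hμ
          have : μ + 2 ∈ marks (Op.mtch a :: t) 0 := by
            rw [hm]; exact List.mem_map.2 ⟨μ, hμ, rfl⟩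
          rcases h _ this with h2 | h2
          · left; omega
          · right; omega
        obtain ⟨o1', o2', hdec, hlen⟩ := ih u' v' (by omega) hvt h'
        refine ⟨Op.mtch a :: o1', o2', ?_, by simp [src, hlen]⟩
        simp only [src_mtch, List.drop_succ_cons, Nat.succ_sub_succ, List.cons_append]
        rw [← hdec]
    | subst a b =>
      have hm : marks (Op.subst a b :: t) 0 = 1 :: (marks t 0).map (· + 2) := by
        simp [marks, hsh]
      have hu1 : 1 ≤ u := by
        rcases h 1 (by rw [hm]; exact List.mem_cons_self) with h2 | h2 <;> omega
      obtain ⟨u', rfl⟩ : ∃ w, u = w + 1 := ⟨u - 1, by omega⟩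
      have hvt : v' ≤ (src t).length := by simp [src] at hv; omega
      have h' : ∀ μ ∈ marks t 0, μ ≤ 2*u' ∨ 2*v' ≤ μ := by
        intro μ hμ
        have : μ + 2 ∈ marks (Op.subst a b :: t) 0 := by
          rw [hm]; exact List.mem_cons_of_mem _ (List.mem_map.2 ⟨μ, hμ, rfl⟩)
        rcases h _ this with h2 | h2
        · left; omega
        · right; omega
      obtain ⟨o1', o2', hdec, hlen⟩ := ih u' v' (by omega) hvt h'
      refine ⟨Op.subst a b :: o1', o2', ?_, by simp [src, hlen]⟩
      simp only [src_subst, List.drop_succ_cons, Nat.succ_sub_succ, List.cons_append]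
      rw [← hdec]
    | del a =>
      have hm : marks (Op.del a :: t) 0 = 1 :: (marks t 0).map (· + 2) := by
        simp [marks, hsh]
      have hu1 : 1 ≤ u := by
        rcases h 1 (by rw [hm]; exact List.mem_cons_self) with h2 | h2 <;> omega
      obtain ⟨u', rfl⟩ : ∃ w, u = w + 1 := ⟨u - 1, by omega⟩
      have hvt : v' ≤ (src t).length := by simp [src] at hv; omega
      have h' : ∀ μ ∈ marks t 0, μ ≤ 2*u' ∨ 2*v' ≤ μ := by
        intro μ hμ
        have : μ + 2 ∈ marks (Op.del a :: t) 0 := by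
          rw [hm]; exact List.mem_cons_of_mem _ (List.mem_map.2 ⟨μ, hμ, rfl⟩)
        rcases h _ this with h2 | h2
        · left; omega
        · right; omega
      obtain ⟨o1', o2', hdec, hlen⟩ := ih u' v' (by omega) hvt h'
      refine ⟨Op.del a :: o1', o2', ?_, by simp [src, hlen]⟩
      simp only [src_del, List.drop_succ_cons, Nat.succ_sub_succ, List.cons_append]
      rw [← hdec]
    | ins b =>
      have hm : marks (Op.ins b :: t) 0 = 0 :: marks t 0 := by simp [marks]
      have h' : ∀ μ ∈ marks t 0, μ ≤ 2*u ∨ 2*(v'+1) ≤ μ := by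
        intro μ hμ
        exact h _ (by rw [hm]; exact List.mem_cons_of_mem _ hμ)
      obtain ⟨o1', o2', hdec, hlen⟩ := ih u (v'+1) huv (by simpa [src] using hv) h'
      refine ⟨Op.ins b :: o1', o2', ?_, by simpa [src] using hlen⟩
      simp only [src_ins, List.cons_append]
      rw [← hdec]

/-- Pigeonhole: a window of half-length `m` avoiding all marks, not too far right. -/
theorem pigeon (m : ℕ) (hm : 0 < m) (M : Finset ℕ) :
    ∀ c u : ℕ, (M.filter (fun μ => 2*u < μ)).card ≤ c →
    u ≤ m * (M.filter (fun μ => μ ≤ 2*u)).card →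
    ∃ u', u' ≤ m * M.card ∧ ∀ μ ∈ M, μ ≤ 2*u' ∨ 2*(u'+m) ≤ μ := by
  intro c
  induction c with
  | zero =>
    intro u hc hu
    refine ⟨u, le_trans hu (Nat.mul_le_mul_left m
      (Finset.card_le_card (Finset.filter_subset _ _))), ?_⟩
    intro μ hμ
    left
    by_contra hlt
    have hmem : μ ∈ M.filter (fun μ => 2*u < μ) := Finset.mem_filter.2 ⟨hμ, by omega⟩
    have := Finset.card_pos.2 ⟨μ, hmem⟩
    omega
  | succ c ih =>
    intro u hc hu
    by_cases hcl : ∀ μ ∈ M, μ ≤ 2*u ∨ 2*(u+m) ≤ μ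
    · exact ⟨u, le_trans hu (Nat.mul_le_mul_left m
        (Finset.card_le_card (Finset.filter_subset _ _))), hcl⟩
    · push_neg at hcl
      obtain ⟨μ0, hμ0M, hμ0a, hμ0b⟩ := hcl
      have hWne : (M.filter (fun μ => 2*u < μ ∧ μ < 2*(u+m))).Nonempty :=
        ⟨μ0, Finset.mem_filter.2 ⟨hμ0M, by omega⟩⟩
      set μ := (M.filter (fun μ => 2*u < μ ∧ μ < 2*(u+m))).max' hWne with hμdef
      have hμW := Finset.max'_mem _ hWne
      rw [← hμdef] at hμW
      have hμM : μ ∈ M := (Finset.mem_filter.1 hμW).1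
      have hμlo : 2*u < μ := (Finset.mem_filter.1 hμW).2.1
      have hμhi : μ < 2*(u+m) := (Finset.mem_filter.1 hμW).2.2
      have hμmax : ∀ ν ∈ M, 2*u < ν → ν < 2*(u+m) → ν ≤ μ := by
        intro ν hν h1 h2
        exact Finset.le_max' _ _ (Finset.mem_filter.2 ⟨hν, h1, h2⟩)
      have hle : μ ≤ 2*((μ+1)/2) := by omega
      have h1 : u < (μ+1)/2 := by omega
      have h2 : (μ+1)/2 ≤ u + m := by omega
      apply ih ((μ+1)/2)
      · have hsub : M.filter (fun ν => 2*((μ+1)/2) < ν) ⊆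
            (M.filter (fun ν => 2*u < ν)).erase μ := by
          intro ν hν
          obtain ⟨hνM, hν2⟩ := Finset.mem_filter.1 hν
          exact Finset.mem_erase.2 ⟨by omega, Finset.mem_filter.2 ⟨hνM, by omega⟩⟩
        have hc1 := Finset.card_le_card hsub
        have hc2 : ((M.filter (fun ν => 2*u < ν)).erase μ).card
            = (M.filter (fun ν => 2*u < ν)).card - 1 :=
          Finset.card_erase_of_mem (Finset.mem_filter.2 ⟨hμM, hμlo⟩)
        have hc3 : 0 < (M.filter (fun ν => 2*u < ν)).card :=
          Finset.card_pos.2 ⟨μ, Finset.mem_filter.2 ⟨hμM, hμlo⟩⟩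
        omega
      · have hsub : insert μ (M.filter (fun ν => ν ≤ 2*u)) ⊆
            M.filter (fun ν => ν ≤ 2*((μ+1)/2)) := by
          intro ν hν
          rcases Finset.mem_insert.1 hν with rfl | hν
          · exact Finset.mem_filter.2 ⟨hμM, hle⟩
          · obtain ⟨hνM, hν2⟩ := Finset.mem_filter.1 hν
            exact Finset.mem_filter.2 ⟨hνM, by omega⟩
        have hnotmem : μ ∉ M.filter (fun ν => ν ≤ 2*u) := by
          intro hmem
          have := (Finset.mem_filter.1 hmem).2
          omega
        have hins := Finset.card_insert_of_notMem hnotmem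
        have hcle := Finset.card_le_card hsub
        calc (μ+1)/2 ≤ u + m := h2
          _ ≤ m * ((M.filter (fun ν => ν ≤ 2*u)).card + 1) := by
              rw [Nat.mul_add]; omega
          _ ≤ m * (M.filter (fun ν => ν ≤ 2*((μ+1)/2))).card := by
              apply Nat.mul_le_mul_left; omega

theorem repPrefix_length [Inhabited α] (Q : List α) (a b : ℕ) :
    (repPrefix Q a b).length = b - a := by simp [repPrefix]

theorem repPrefix_getD [Inhabited α] (Q : List α) (a b i : ℕ) (h : i < b - a) :
    (repPrefix Q a b).getD i default = Q.getD ((a + i) % Q.length) default := by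
  have hlen : i < (repPrefix Q a b).length := by rw [repPrefix_length]; omega
  rw [List.getD_eq_getElem _ _ hlen]
  simp [repPrefix]

theorem repPrefix_append [Inhabited α] (Q : List α) (a c b : ℕ) (h1 : a ≤ c) (h2 : c ≤ b) :
    repPrefix Q a b = repPrefix Q a c ++ repPrefix Q c b := by
  unfold repPrefix
  rw [← List.map_append]
  congr 1
  have h : List.range' a (c-a) ++ List.range' (a + (c-a)) (b-c) = List.range' a ((c-a)+(b-c)) :=
    List.range'_append_1
  rw [show a + (c-a) = c by omega, show (c-a)+(b-c) = b - a by omega] at h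
  exact h.symm

theorem period_mul {β : Type*} {f : ℕ → β} {d : ℕ} (hf : ∀ i, f (i + d) = f i) :
    ∀ q i, f (i + q * d) = f i := by
  intro q
  induction q with
  | zero => simp
  | succ q ih =>
    intro i
    rw [Nat.succ_mul, ← Nat.add_assoc, hf, ih]

theorem gcd_period {β : Type*} {f : ℕ → β} : ∀ d m : ℕ,
    (∀ i, f (i + d) = f i) → (∀ i, f (i + m) = f i) →
    ∀ i, f (i + Nat.gcd d m) = f i := by
  intro d
  induction d using Nat.strong_induction_on with
  | _ d ih =>
    intro m hd hm i
    rcases Nat.eq_zero_or_pos d with rfl | hdpos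
    · simpa [Nat.gcd_zero_left] using hm i
    · rw [Nat.gcd_rec d m]
      refine ih (m % d) (Nat.mod_lt _ hdpos) d ?_ hd i
      intro i2
      have h1 : f (i2 + m % d + m / d * d) = f (i2 + m % d) := period_mul hd _ _
      have h2 : i2 + m % d + m / d * d = i2 + m := by
        have := Nat.mod_add_div' m d
        omega
      rw [h2] at h1
      rw [← h1, hm]

theorem flatten_replicate_getD [Inhabited α] (U : List α) (hU : 0 < U.length) :
    ∀ t i : ℕ, i < t * U.length →
    ((List.replicate t U).flatten).getD i default = U.getD (i % U.length) default := by
  intro t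
  induction t with
  | zero => intro i h; omega
  | succ t ih =>
    intro i h
    rw [List.replicate_succ, List.flatten_cons]
    by_cases hi : i < U.length
    · rw [List.getD_append _ _ _ _ hi, Nat.mod_eq_of_lt hi]
    · push_neg at hi
      have hsm : (t+1) * U.length = t * U.length + U.length := by ring
      rw [List.getD_append_right _ _ _ _ hi, ih (i - U.length) (by omega)]
      congr 1
      conv_rhs => rw [show i = (i - U.length) + U.length by omega]
      rw [Nat.add_mod_right]

/-- For a primitive `Q`, two equal length-`|Q|` windows of `Q^∞` must be aligned. -/
theorem rotation_sync [Inhabited α] {Q : List α} (hQ : Primitive Q) {x x' : ℕ}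
    (h : ∀ s, s < Q.length →
      Q.getD ((x + s) % Q.length) default = Q.getD ((x' + s) % Q.length) default) :
    x % Q.length = x' % Q.length := by
  have hm0 : 0 < Q.length := List.length_pos_iff.2 hQ.1
  set m := Q.length with hm
  set f : ℕ → α := fun i => Q.getD (i % m) default with hf
  have hfm : ∀ i, f (i + m) = f i := by intro i; simp only [hf]; rw [Nat.add_mod_right]
  set d := (x' % m + m - x % m) % m with hd
  have hxm : x % m < m := Nat.mod_lt _ hm0
  have hxm' : x' % m < m := Nat.mod_lt _ hm0
  have hdm : d < m := Nat.mod_lt _ hm0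
  have key : ∀ a s : ℕ, (a + s) % m = (a % m + s) % m := by
    intro a s
    rw [Nat.add_mod, Nat.add_mod (a % m) s, Nat.mod_mod]
  obtain ⟨p, hp⟩ : ∃ p, x' % m + m - x % m = p * m + d := by
    refine ⟨(x' % m + m - x % m) / m, ?_⟩
    have := Nat.mod_add_div' (x' % m + m - x % m) m
    omega
  have hper : ∀ j, f (j + d) = f j := by
    intro j
    set s := (j + m - x % m) % m with hs
    have hsm : s < m := Nat.mod_lt _ hm0
    obtain ⟨q, hq⟩ : ∃ q, j + m - x % m = q * m + s := by
      refine ⟨(j + m - x % m) / m, ?_⟩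
      have := Nat.mod_add_div' (j + m - x % m) m
      omega
    have e1 : (x + s) % m = j % m := by
      rw [key x s]
      have hw : (x % m + s) + q * m = j + m := by omega
      calc (x % m + s) % m = ((x % m + s) + q * m) % m :=
            (Nat.add_mul_mod_self_right _ _ _).symm
        _ = (j + m) % m := by rw [hw]
        _ = j % m := Nat.add_mod_right j m
    have e2 : (x' + s) % m = (j + d) % m := by
      rw [key x' s]
      have hz1 : (x' % m + s) + q * m = j + m + x' % m - x % m := by omega
      have hz2 : (j + d) + p * m = j + m + x' % m - x % m := by omega
      calc (x' % m + s) % m = ((x' % m + s) + q * m) % m :=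
            (Nat.add_mul_mod_self_right _ _ _).symm
        _ = ((j + d) + p * m) % m := by rw [hz1, ← hz2]
        _ = (j + d) % m := Nat.add_mul_mod_self_right _ _ _
    calc f (j + d) = Q.getD ((j + d) % m) default := rfl
      _ = Q.getD ((x' + s) % m) default := by rw [e2]
      _ = Q.getD ((x + s) % m) default := (h s hsm).symm
      _ = Q.getD (j % m) default := by rw [e1]
      _ = f j := rfl
  by_cases hd0 : d = 0
  · -- aligned
    rw [hd0] at hp
    rcases p with _ | _ | p
    · omega
    · omega
    · exfalso
      have h2m : 2 * m ≤ (p + 1 + 1) * m := Nat.mul_le_mul_right m (by omega)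
      omega
  · -- primitivity contradiction
    exfalso
    have hdpos : 0 < d := Nat.pos_of_ne_zero hd0
    have hperg : ∀ i, f (i + Nat.gcd d m) = f i := gcd_period d m hper hfm
    set g := Nat.gcd d m with hg
    have hg0 : 0 < g := Nat.gcd_pos_of_pos_left _ hdpos
    have hgled : g ≤ d := Nat.le_of_dvd hdpos (Nat.gcd_dvd_left d m)
    have hglt : g < m := by omega
    have hgdvd : g ∣ m := Nat.gcd_dvd_right d m
    have hQg : ∀ i, f i = f (i % g) := by
      intro i
      have h3 : f (i % g + i / g * g) = f (i % g) := period_mul hperg _ _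
      rw [Nat.mod_add_div'] at h3
      exact h3
    set t := m / g with ht
    have hmt : t * g = m := Nat.div_mul_cancel hgdvd
    have ht2 : 2 ≤ t := by
      rcases t with _ | _ | t
      · omega
      · omega
      · omega
    have hUlen : (Q.take g).length = g := by
      rw [List.length_take]
      omega
    have hflat : Q = (List.replicate t (Q.take g)).flatten := by
      apply List.ext_getElem
      · simp only [List.length_flatten, List.map_replicate, hUlen, List.sum_replicate,
          smul_eq_mul]
        omega
      · intro i h1 h2
        have hi : i < m := by omega
        have higm : i % g < m := by
          have := Nat.mod_lt i hg0
          omega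
        rw [← List.getD_eq_getElem Q default h1, ← List.getD_eq_getElem _ default h2]
        have hgetd : ((List.replicate t (Q.take g)).flatten).getD i default
            = (Q.take g).getD (i % g) default := by
          have := flatten_replicate_getD (Q.take g) (by omega) t i (by rw [hUlen]; omega)
          rw [hUlen] at this
          exact this
        have htake : (Q.take g).getD (i % g) default = Q.getD (i % g) default := by
          have hig : i % g < g := Nat.mod_lt i hg0
          rw [List.getD_eq_getElem _ default (by omega : i % g < (Q.take g).length),
            List.getD_eq_getElem Q default (by omega : i % g < Q.length)]
          exact List.getElem_take ..
        rw [hgetd, htake]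
        have hQgi := hQg i
        simp only [hf] at hQgi
        rw [Nat.mod_eq_of_lt hi, Nat.mod_eq_of_lt higm] at hQgi
        exact hQgi
    exact hQ.2 (Q.take g) t ht2 hflat

theorem dvd_add_pad (L x : ℕ) (hL : 0 < L) : L ∣ (x + (L - x % L) % L) := by
  rcases Nat.eq_zero_or_pos (x % L) with h0 | h0
  · have he0 : (L - x % L) % L = 0 := by rw [h0, Nat.sub_zero, Nat.mod_self]
    rw [he0, Nat.add_zero]
    exact Nat.dvd_of_mod_eq_zero h0
  · have hxl : x % L < L := Nat.mod_lt _ hL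
    have he0 : (L - x % L) % L = L - x % L := Nat.mod_eq_of_lt (by omega)
    apply Nat.dvd_of_mod_eq_zero
    rw [he0, Nat.add_mod, Nat.mod_eq_of_lt (show L - x % L < L by omega),
      show x % L + (L - x % L) = L by omega, Nat.mod_self]

end EditSplitAux
/-- splitting a string that is close (in edit distance) to two substrings
of Q^∞, consistently for both alignments. -/
theorem edit_split {α : Type*} [DecidableEq α] [Inhabited α]
    (S Q : List α) (k : ℕ) (hk : 0 < k) (hQ : Primitive Q)
    (hlen : (2 * k + 1) * Q.length ≤ S.length ∨ Q.length = 1)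
    (l r l' r' : ℕ) (hlr : l ≤ r) (hlr' : l' ≤ r')
    (h1 : editDist S (repPrefix Q l r) ≤ k)
    (h2 : editDist S (repPrefix Q l' r') ≤ k) :
    ∃ (j j' t : ℕ), t ≤ S.length ∧
      editDist S (repPrefix Q l r)
        = editDist (S.take t) (repPrefix Q l (j * Q.length))
          + editDist (S.drop t) (repPrefix Q (j * Q.length) r) ∧
      editDist S (repPrefix Q l' r')
        = editDist (S.take t) (repPrefix Q l' (j' * Q.length))
          + editDist (S.drop t) (repPrefix Q (j' * Q.length) r') := by
  classical
  have hm0 : 0 < Q.length := List.length_pos_iff.2 hQ.1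
  rcases hlen with hn | hm1
  · -- main case
    obtain ⟨ops, hsrc, htgt, hcost⟩ := EditSplitAux.exists_ops S (repPrefix Q l r)
    obtain ⟨ops', hsrc', htgt', hcost'⟩ := EditSplitAux.exists_ops S (repPrefix Q l' r')
    have hMcard : ((EditSplitAux.marks ops 0 ++ EditSplitAux.marks ops' 0).toFinset).card
        ≤ 2 * k := by
      calc ((EditSplitAux.marks ops 0 ++ EditSplitAux.marks ops' 0).toFinset).card
          ≤ (EditSplitAux.marks ops 0 ++ EditSplitAux.marks ops' 0).length :=
            List.toFinset_card_le _
        _ = EditSplitAux.cost ops + EditSplitAux.cost ops' := by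
            simp [EditSplitAux.marks_length]
        _ ≤ 2 * k := by rw [hcost, hcost']; omega
    obtain ⟨u, huM, hclean⟩ := EditSplitAux.pigeon Q.length hm0
      ((EditSplitAux.marks ops 0 ++ EditSplitAux.marks ops' 0).toFinset)
      ((EditSplitAux.marks ops 0 ++ EditSplitAux.marks ops' 0).toFinset).card 0
      (Finset.card_filter_le _ _) (Nat.zero_le _)
    have hum : u + Q.length ≤ S.length := by
      have h1 : Q.length * ((EditSplitAux.marks ops 0 ++
            EditSplitAux.marks ops' 0).toFinset).card ≤ Q.length * (2 * k) :=
        Nat.mul_le_mul_left _ hMcard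
      have h2 : Q.length * (2 * k) + Q.length = (2 * k + 1) * Q.length := by ring
      omega
    have hcl : ∀ μ ∈ EditSplitAux.marks ops 0, μ ≤ 2*u ∨ 2*(u + Q.length) ≤ μ := by
      intro μ hμ
      exact hclean μ (List.mem_toFinset.2 (List.mem_append.2 (Or.inl hμ)))
    have hcl' : ∀ μ ∈ EditSplitAux.marks ops' 0, μ ≤ 2*u ∨ 2*(u + Q.length) ≤ μ := by
      intro μ hμ
      exact hclean μ (List.mem_toFinset.2 (List.mem_append.2 (Or.inr hμ)))
    obtain ⟨o1, o2, hdec, hlen1⟩ := EditSplitAux.clean_decomp ops u (u + Q.length)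
      (by omega) (by rw [hsrc]; omega) hcl
    obtain ⟨o1', o2', hdec', hlen1'⟩ := EditSplitAux.clean_decomp ops' u (u + Q.length)
      (by omega) (by rw [hsrc']; omega) hcl'
    rw [hsrc, Nat.add_sub_cancel_left] at hdec
    rw [hsrc', Nat.add_sub_cancel_left] at hdec'
    set W := (S.drop u).take Q.length with hWdef
    have hWlen : W.length = Q.length := by
      rw [hWdef, List.length_take, List.length_drop]
      omega
    have hT : repPrefix Q l r = EditSplitAux.tgt o1 ++ W ++ EditSplitAux.tgt o2 := by
      rw [← htgt, hdec]
      simp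
    have hT' : repPrefix Q l' r' = EditSplitAux.tgt o1' ++ W ++ EditSplitAux.tgt o2' := by
      rw [← htgt', hdec']
      simp
    have hTlen : r - l = (EditSplitAux.tgt o1).length + Q.length
        + (EditSplitAux.tgt o2).length := by
      have h := EditSplitAux.repPrefix_length Q l r
      rw [hT] at h
      simp only [List.length_append, hWlen] at h
      omega
    have hTlen' : r' - l' = (EditSplitAux.tgt o1').length + Q.length
        + (EditSplitAux.tgt o2').length := by
      have h := EditSplitAux.repPrefix_length Q l' r'
      rw [hT'] at h
      simp only [List.length_append, hWlen] at h
      omega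
    have hWget : ∀ s, s < Q.length → W.getD s default
        = Q.getD ((l + (EditSplitAux.tgt o1).length + s) % Q.length) default := by
      intro s hs
      have h1 : (repPrefix Q l r).getD ((EditSplitAux.tgt o1).length + s) default
          = W.getD s default := by
        rw [hT, List.append_assoc,
          List.getD_append_right _ _ _ _ (Nat.le_add_right _ _),
          Nat.add_sub_cancel_left,
          List.getD_append _ _ _ _ (by rw [hWlen]; omega)]
      rw [← h1, EditSplitAux.repPrefix_getD Q l r _ (by omega),
        show l + ((EditSplitAux.tgt o1).length + s)
          = l + (EditSplitAux.tgt o1).length + s by omega]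
    have hWget' : ∀ s, s < Q.length → W.getD s default
        = Q.getD ((l' + (EditSplitAux.tgt o1').length + s) % Q.length) default := by
      intro s hs
      have h1 : (repPrefix Q l' r').getD ((EditSplitAux.tgt o1').length + s) default
          = W.getD s default := by
        rw [hT', List.append_assoc,
          List.getD_append_right _ _ _ _ (Nat.le_add_right _ _),
          Nat.add_sub_cancel_left,
          List.getD_append _ _ _ _ (by rw [hWlen]; omega)]
      rw [← h1, EditSplitAux.repPrefix_getD Q l' r' _ (by omega),
        show l' + ((EditSplitAux.tgt o1').length + s)
          = l' + (EditSplitAux.tgt o1').length + s by omega]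
    have hsync : (l + (EditSplitAux.tgt o1).length) % Q.length
        = (l' + (EditSplitAux.tgt o1').length) % Q.length := by
      apply EditSplitAux.rotation_sync hQ
      intro s hs
      rw [← hWget s hs, ← hWget' s hs]
    set e := (Q.length - (l + (EditSplitAux.tgt o1).length) % Q.length) % Q.length with he
    have heL : e < Q.length := Nat.mod_lt _ hm0
    obtain ⟨j, hj⟩ := EditSplitAux.dvd_add_pad Q.length (l + (EditSplitAux.tgt o1).length) hm0
    have hj2 : j * Q.length = l + (EditSplitAux.tgt o1).length + e := by
      rw [Nat.mul_comm]; omega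
    obtain ⟨j', hjx⟩ : Q.length ∣ (l' + (EditSplitAux.tgt o1').length + e) := by
      rw [he, hsync]
      exact EditSplitAux.dvd_add_pad Q.length (l' + (EditSplitAux.tgt o1').length) hm0
    have hj2' : j' * Q.length = l' + (EditSplitAux.tgt o1').length + e := by
      rw [Nat.mul_comm]; omega
    -- split the first alignment
    have hops2 : ops = (o1 ++ (W.take e).map EditSplitAux.Op.mtch)
        ++ ((W.drop e).map EditSplitAux.Op.mtch ++ o2) := by
      rw [hdec]
      simp only [List.append_assoc, List.append_cancel_left_eq]
      rw [← List.append_assoc, ← List.map_append, List.take_append_drop]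
    have hops2' : ops' = (o1' ++ (W.take e).map EditSplitAux.Op.mtch)
        ++ ((W.drop e).map EditSplitAux.Op.mtch ++ o2') := by
      rw [hdec']
      simp only [List.append_assoc, List.append_cancel_left_eq]
      rw [← List.append_assoc, ← List.map_append, List.take_append_drop]
    have hsplit := EditSplitAux.split_at
      (o1 := o1 ++ (W.take e).map EditSplitAux.Op.mtch)
      (o2 := (W.drop e).map EditSplitAux.Op.mtch ++ o2)
      (by rw [← hops2, hsrc, htgt]; exact hcost)
    have hsplit' := EditSplitAux.split_at
      (o1 := o1' ++ (W.take e).map EditSplitAux.Op.mtch)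
      (o2 := (W.drop e).map EditSplitAux.Op.mtch ++ o2')
      (by rw [← hops2', hsrc', htgt']; exact hcost')
    rw [← hops2, hsrc, htgt] at hsplit
    rw [← hops2', hsrc', htgt'] at hsplit'
    simp only [EditSplitAux.src_append, EditSplitAux.src_map_mtch,
      EditSplitAux.tgt_append, EditSplitAux.tgt_map_mtch] at hsplit hsplit'
    -- identify the pieces
    have hlen2 : (EditSplitAux.src o1 ++ W.take e).length = u + e := by
      rw [List.length_append, hlen1, List.length_take, hWlen]
      omega
    have hlen2' : (EditSplitAux.src o1' ++ W.take e).length = u + e := by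
      rw [List.length_append, hlen1', List.length_take, hWlen]
      omega
    have hSdec : S = (EditSplitAux.src o1 ++ W.take e)
        ++ (W.drop e ++ EditSplitAux.src o2) := by
      conv_lhs => rw [← hsrc, hdec]
      simp only [EditSplitAux.src_append, EditSplitAux.src_map_mtch]
      simp only [List.append_assoc, List.append_cancel_left_eq]
      rw [← List.append_assoc, List.take_append_drop]
    have hSdec' : S = (EditSplitAux.src o1' ++ W.take e)
        ++ (W.drop e ++ EditSplitAux.src o2') := by
      conv_lhs => rw [← hsrc', hdec']
      simp only [EditSplitAux.src_append, EditSplitAux.src_map_mtch]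
      simp only [List.append_assoc, List.append_cancel_left_eq]
      rw [← List.append_assoc, List.take_append_drop]
    have htake : S.take (u + e) = EditSplitAux.src o1 ++ W.take e := by
      conv_lhs => rw [hSdec]
      exact List.take_left' hlen2
    have hdrop : S.drop (u + e) = W.drop e ++ EditSplitAux.src o2 := by
      conv_lhs => rw [hSdec]
      exact List.drop_left' hlen2
    have htake' : S.take (u + e) = EditSplitAux.src o1' ++ W.take e := by
      conv_lhs => rw [hSdec']
      exact List.take_left' hlen2'
    have hdrop' : S.drop (u + e) = W.drop e ++ EditSplitAux.src o2' := by
      conv_lhs => rw [hSdec']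
      exact List.drop_left' hlen2'
    have hlen3 : (EditSplitAux.tgt o1 ++ W.take e).length
        = (EditSplitAux.tgt o1).length + e := by
      rw [List.length_append, List.length_take, hWlen]
      omega
    have hlen3' : (EditSplitAux.tgt o1' ++ W.take e).length
        = (EditSplitAux.tgt o1').length + e := by
      rw [List.length_append, List.length_take, hWlen]
      omega
    have hTdec : repPrefix Q l r = (EditSplitAux.tgt o1 ++ W.take e)
        ++ (W.drop e ++ EditSplitAux.tgt o2) := by
      rw [hT]
      simp only [List.append_assoc, List.append_cancel_left_eq]
      rw [← List.append_assoc, List.take_append_drop]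
    have hTdec' : repPrefix Q l' r' = (EditSplitAux.tgt o1' ++ W.take e)
        ++ (W.drop e ++ EditSplitAux.tgt o2') := by
      rw [hT']
      simp only [List.append_assoc, List.append_cancel_left_eq]
      rw [← List.append_assoc, List.take_append_drop]
    have hTsplit : repPrefix Q l r
        = repPrefix Q l (j * Q.length) ++ repPrefix Q (j * Q.length) r :=
      EditSplitAux.repPrefix_append Q l (j * Q.length) r (by omega) (by omega)
    have hTsplit' : repPrefix Q l' r'
        = repPrefix Q l' (j' * Q.length) ++ repPrefix Q (j' * Q.length) r' :=
      EditSplitAux.repPrefix_append Q l' (j' * Q.length) r' (by omega) (by omega)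
    have hlen4 : (repPrefix Q l (j * Q.length)).length
        = (EditSplitAux.tgt o1).length + e := by
      rw [EditSplitAux.repPrefix_length]
      omega
    have hlen4' : (repPrefix Q l' (j' * Q.length)).length
        = (EditSplitAux.tgt o1').length + e := by
      rw [EditSplitAux.repPrefix_length]
      omega
    have htgtA : EditSplitAux.tgt o1 ++ W.take e = repPrefix Q l (j * Q.length) := by
      have t1 : (repPrefix Q l r).take ((EditSplitAux.tgt o1).length + e)
          = EditSplitAux.tgt o1 ++ W.take e := by
        rw [hTdec]
        exact List.take_left' hlen3
      have t2 : (repPrefix Q l r).take ((EditSplitAux.tgt o1).length + e)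
          = repPrefix Q l (j * Q.length) := by
        rw [hTsplit]
        exact List.take_left' hlen4
      rw [← t1, t2]
    have htgtB : W.drop e ++ EditSplitAux.tgt o2 = repPrefix Q (j * Q.length) r := by
      have t1 : (repPrefix Q l r).drop ((EditSplitAux.tgt o1).length + e)
          = W.drop e ++ EditSplitAux.tgt o2 := by
        rw [hTdec]
        exact List.drop_left' hlen3
      have t2 : (repPrefix Q l r).drop ((EditSplitAux.tgt o1).length + e)
          = repPrefix Q (j * Q.length) r := by
        rw [hTsplit]
        exact List.drop_left' hlen4
      rw [← t1, t2]
    have htgtA' : EditSplitAux.tgt o1' ++ W.take e = repPrefix Q l' (j' * Q.length) := by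
      have t1 : (repPrefix Q l' r').take ((EditSplitAux.tgt o1').length + e)
          = EditSplitAux.tgt o1' ++ W.take e := by
        rw [hTdec']
        exact List.take_left' hlen3'
      have t2 : (repPrefix Q l' r').take ((EditSplitAux.tgt o1').length + e)
          = repPrefix Q l' (j' * Q.length) := by
        rw [hTsplit']
        exact List.take_left' hlen4'
      rw [← t1, t2]
    have htgtB' : W.drop e ++ EditSplitAux.tgt o2' = repPrefix Q (j' * Q.length) r' := by
      have t1 : (repPrefix Q l' r').drop ((EditSplitAux.tgt o1').length + e)
          = W.drop e ++ EditSplitAux.tgt o2' := by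
        rw [hTdec']
        exact List.drop_left' hlen3'
      have t2 : (repPrefix Q l' r').drop ((EditSplitAux.tgt o1').length + e)
          = repPrefix Q (j' * Q.length) r' := by
        rw [hTsplit']
        exact List.drop_left' hlen4'
      rw [← t1, t2]
    rw [← htake, ← hdrop, htgtA, htgtB] at hsplit
    rw [← htake', ← hdrop', htgtA', htgtB'] at hsplit'
    exact ⟨j, j', u + e, by omega, hsplit, hsplit'⟩
  · -- |Q| = 1
    refine ⟨r, r', S.length, le_rfl, ?_, ?_⟩
    · rw [hm1, Nat.mul_one, List.take_length, List.drop_length]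
      have h0 : repPrefix Q r r = [] := by simp [repPrefix]
      rw [h0]
      simp [editDist, levenshtein_nil_nil]
    · rw [hm1, Nat.mul_one, List.take_length, List.drop_length]
      have h0 : repPrefix Q r' r' = [] := by simp [repPrefix]
      rw [h0]
      simp [editDist, levenshtein_nil_nil]
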